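/- (Deterministic form of Lemma 3.4.) Let N ∈ ℕ, M = 2^{N+1}, and let Λ_N = {(−1,0)} ∪ {(n,k) : 0 ≤ n ≤ N, 0 ≤ k < 2^n}, a set of cardinality M. Define the linear map w : ℝ^{Λ_N} → ℝ^M by w_ℓ(z) = Σ_{(n,k)∈Λ_N} z_{n,k} · Δ^N_ℓ Ψ_{n,k} for ℓ = 0, …, M−1, where Ψ_{−1,0} := Ψ_{−1}. Let F : ℝ^M → ℝ be differentiable and set G = F ∘ w. If z ∈ ℝ^{Λ_N} and c ≥ 0 are such that |∂F/∂w_ℓ (w(z))| ≤ c for all ℓ = 0, …, M−1, then for every 0 ≤ n ≤ N and 0 ≤ k < 2^n, |∂G/∂z_{n,k}(z)| ≤ c · 2^{−n/2 + 1}. -/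

import Mathlib

open MeasureTheory

/-- The Haar mother wavelet. -/
noncomputable def haarMother (t : ℝ) : ℝ :=
  if 0 ≤ t ∧ t < 1/2 then 1 else if 1/2 ≤ t ∧ t < 1 then -1 else 0

/-- The Haar function ψ_{n,k}. -/
noncomputable def haarFn (n k : ℕ) (t : ℝ) : ℝ :=
  (2:ℝ) ^ ((n : ℝ)/2) * haarMother ((2:ℝ)^n * t - k)

/-- The antiderivative Ψ_{n,k}(t) = ∫_0^t ψ_{n,k}(s) ds. -/
noncomputable def haarAnti (n k : ℕ) (t : ℝ) : ℝ := ∫ s in (0:ℝ)..t, haarFn n k s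

/-- The function ψ_{-1} = 1_{[0,1]}. -/
noncomputable def haarNeg (t : ℝ) : ℝ := Set.indicator (Set.Icc (0:ℝ) 1) (fun _ => 1) t

/-- The antiderivative Ψ_{-1}(t) = ∫_0^t ψ_{-1}(s) ds. -/
noncomputable def haarNegAnti (t : ℝ) : ℝ := ∫ s in (0:ℝ)..t, haarNeg s

/-- The dyadic grid point t^N_ℓ = ℓ / 2^{N+1}. -/
noncomputable def gridPt (N ℓ : ℕ) : ℝ := (ℓ : ℝ) / 2 ^ (N+1)

/-- The index set Λ_N = {(-1,0)} ∪ {(n,k) : 0 ≤ n ≤ N, 0 ≤ k < 2^n}; `none` encodes the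
index (-1,0). -/
abbrev HaarIdx (N : ℕ) := Option ((n : Fin (N+1)) × Fin (2^(n:ℕ)))

/-- The increment Δ^N_ℓ Ψ_i over the grid cell `[t^N_ℓ, t^N_{ℓ+1}]` for an index `i ∈ Λ_N`. -/
noncomputable def deltaPsi (N : ℕ) (i : HaarIdx N) (ℓ : Fin (2^(N+1))) : ℝ :=
  match i with
  | none => haarNegAnti (gridPt N ((ℓ : ℕ)+1)) - haarNegAnti (gridPt N (ℓ : ℕ))
  | some ⟨n, k⟩ => haarAnti n k (gridPt N ((ℓ : ℕ)+1)) - haarAnti n k (gridPt N (ℓ : ℕ))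

/-- The linear map sending Haar coefficients to the vector of Brownian-path increments:
`w_ℓ(z) = Σ_{(n,k) ∈ Λ_N} z_{n,k} Δ^N_ℓ Ψ_{n,k}`. -/
noncomputable def wMap (N : ℕ) (z : HaarIdx N → ℝ) : Fin (2^(N+1)) → ℝ :=
  fun ℓ => ∑ i : HaarIdx N, z i * deltaPsi N i ℓ

section Aux

lemma measurable_haarMother : Measurable haarMother := by
  unfold haarMother
  apply Measurable.ite
  · have : {t : ℝ | 0 ≤ t ∧ t < 1/2} = Set.Ico 0 (1/2) := rfl
    rw [this]; exact measurableSet_Ico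
  · exact measurable_const
  · apply Measurable.ite
    · have : {t : ℝ | 1/2 ≤ t ∧ t < 1} = Set.Ico (1/2 : ℝ) 1 := rfl
      rw [this]; exact measurableSet_Ico
    · exact measurable_const
    · exact measurable_const

lemma measurable_haarFn (n k : ℕ) : Measurable (haarFn n k) := by
  unfold haarFn
  exact (measurable_haarMother.comp (by fun_prop)).const_mul _

lemma abs_haarMother_le (t : ℝ) : |haarMother t| ≤ 1 := by
  unfold haarMother; split <;> [skip; split] <;> norm_num

lemma abs_haarFn_le (n k : ℕ) (t : ℝ) : |haarFn n k t| ≤ (2:ℝ) ^ ((n:ℝ)/2) := by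
  unfold haarFn
  rw [abs_mul, abs_of_pos (by positivity : (0:ℝ) < (2:ℝ) ^ ((n:ℝ)/2))]
  nlinarith [abs_haarMother_le ((2:ℝ)^n * t - k),
    Real.rpow_pos_of_pos (by norm_num : (0:ℝ)<2) ((n:ℝ)/2)]

lemma intervalIntegrable_haarFn (n k : ℕ) (a b : ℝ) :
    IntervalIntegrable (haarFn n k) volume a b := by
  apply IntervalIntegrable.mono_fun' (g := fun _ => (2:ℝ) ^ ((n:ℝ)/2))
  · exact intervalIntegrable_const
  · exact (measurable_haarFn n k).aestronglyMeasurable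
  · exact Filter.Eventually.of_forall fun t => abs_haarFn_le n k t

lemma haarAnti_sub (n k : ℕ) (a b : ℝ) :
    haarAnti n k b - haarAnti n k a = ∫ s in a..b, haarFn n k s := by
  unfold haarAnti
  exact intervalIntegral.integral_interval_sub_left
    (intervalIntegrable_haarFn n k 0 b) (intervalIntegrable_haarFn n k 0 a)

lemma haarFn_eq_zero (n k : ℕ) (t : ℝ)
    (h : t < (k:ℝ)/2^n ∨ ((k:ℝ)+1)/2^n ≤ t) : haarFn n k t = 0 := by
  have h2 : (0:ℝ) < (2:ℝ)^n := by positivity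
  have hkey : (2:ℝ)^n * t - k < 0 ∨ 1 ≤ (2:ℝ)^n * t - k := by
    rcases h with h | h
    · left; rw [lt_div_iff₀ h2] at h; nlinarith
    · right; rw [div_le_iff₀ h2] at h; nlinarith
  unfold haarFn haarMother
  rcases hkey with h | h
  · rw [if_neg (by rintro ⟨h1, h2⟩; linarith), if_neg (by rintro ⟨h1, h2⟩; linarith), mul_zero]
  · rw [if_neg (by rintro ⟨h1, h2⟩; linarith), if_neg (by rintro ⟨h1, h2⟩; linarith), mul_zero]

lemma sum_abs_key (N : ℕ) (n : Fin (N+1)) (k : Fin (2^(n:ℕ))) :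
    ∑ ℓ : Fin (2^(N+1)),
      |(∫ s in gridPt N (ℓ:ℕ)..gridPt N ((ℓ:ℕ)+1), haarFn n k s)| ≤
      (2:ℝ) ^ (-((n:ℕ) : ℝ)/2 + 1) := by
  set p : ℕ := 2^(N+1-(n:ℕ)) with hpdef
  have hp : 2^(n:ℕ) * p = 2^(N+1) := by
    rw [hpdef, ← pow_add]; congr 1; omega
  have hpR : (2:ℝ)^(n:ℕ) * (p:ℝ) = 2^(N+1) := by exact_mod_cast congrArg (Nat.cast (R := ℝ)) hp
  have hppos : 0 < p := by positivity
  have h2n : (0:ℝ) < 2^(n:ℕ) := by positivity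
  have h2N : (0:ℝ) < 2^(N+1) := by positivity
  have hcell : ∀ ℓ : Fin (2^(N+1)),
      |(∫ s in gridPt N (ℓ:ℕ)..gridPt N ((ℓ:ℕ)+1), haarFn n k s)| ≤
      (if (k:ℕ)*p ≤ (ℓ:ℕ)+1 ∧ (ℓ:ℕ) < ((k:ℕ)+1)*p
        then (2:ℝ)^(((n:ℕ):ℝ)/2) / 2^(N+1) else 0) := by
    intro ℓ
    by_cases hcond : (k:ℕ)*p ≤ (ℓ:ℕ)+1 ∧ (ℓ:ℕ) < ((k:ℕ)+1)*p
    · rw [if_pos hcond]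
      have := intervalIntegral.norm_integral_le_of_norm_le_const
        (a := gridPt N (ℓ:ℕ)) (b := gridPt N ((ℓ:ℕ)+1)) (C := (2:ℝ)^(((n:ℕ):ℝ)/2))
        (f := haarFn n k) (fun x _ => abs_haarFn_le n k x)
      rw [Real.norm_eq_abs] at this
      refine this.trans_eq ?_
      unfold gridPt
      rw [show ((((ℓ:ℕ)+1:ℕ)):ℝ)/2^(N+1) - ((ℓ:ℕ):ℝ)/2^(N+1) = 1/2^(N+1) by push_cast; ring]
      rw [abs_of_pos (by positivity)]; ring
    · rw [if_neg hcond]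
      have hab : gridPt N (ℓ:ℕ) ≤ gridPt N ((ℓ:ℕ)+1) := by
        unfold gridPt
        gcongr
        · push_cast; linarith
      have hkp : (((k:ℕ)):ℝ)/2^(n:ℕ) = ((((k:ℕ)*p : ℕ)):ℝ)/2^(N+1) := by
        push_cast; rw [div_eq_div_iff h2n.ne' h2N.ne', ← hpR]; ring
      have hk1p : ((((k:ℕ)):ℝ)+1)/2^(n:ℕ) = (((((k:ℕ)+1)*p : ℕ)):ℝ)/2^(N+1) := by
        push_cast; rw [div_eq_div_iff h2n.ne' h2N.ne', ← hpR]; ring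
      have hz : ∀ t ∈ Set.uIcc (gridPt N (ℓ:ℕ)) (gridPt N ((ℓ:ℕ)+1)), haarFn n k t = 0 := by
        intro t ht
        rw [Set.uIcc_of_le hab, Set.mem_Icc] at ht
        apply haarFn_eq_zero
        rcases Nat.lt_or_ge ((ℓ:ℕ)+1) ((k:ℕ)*p) with hcase | hcase
        · left
          rw [hkp]
          have hlt : (((ℓ:ℕ)+1 : ℕ):ℝ) < (((k:ℕ)*p : ℕ):ℝ) := by exact_mod_cast hcase
          have h2' : gridPt N ((ℓ:ℕ)+1) < ((((k:ℕ)*p : ℕ)):ℝ)/2^(N+1) := by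
            unfold gridPt; gcongr
          linarith [ht.2]
        · right
          have hge : (((k:ℕ)+1)*p : ℕ) ≤ (ℓ:ℕ) :=
            Nat.le_of_not_lt (fun hb => hcond ⟨hcase, hb⟩)
          rw [hk1p]
          have hle : ((((k:ℕ)+1)*p : ℕ):ℝ) ≤ ((ℓ:ℕ):ℝ) := by exact_mod_cast hge
          have h2' : (((((k:ℕ)+1)*p : ℕ)):ℝ)/2^(N+1) ≤ gridPt N (ℓ:ℕ) := by
            unfold gridPt; gcongr
          linarith [ht.1]
      have : (∫ s in gridPt N (ℓ:ℕ)..gridPt N ((ℓ:ℕ)+1), haarFn n k s) = 0 := by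
        rw [intervalIntegral.integral_congr (g := fun _ => 0) hz,
          intervalIntegral.integral_const, smul_zero]
      rw [this, abs_zero]
  calc ∑ ℓ : Fin (2^(N+1)), |(∫ s in gridPt N (ℓ:ℕ)..gridPt N ((ℓ:ℕ)+1), haarFn n k s)|
      ≤ ∑ ℓ : Fin (2^(N+1)), (if (k:ℕ)*p ≤ (ℓ:ℕ)+1 ∧ (ℓ:ℕ) < ((k:ℕ)+1)*p
          then (2:ℝ)^(((n:ℕ):ℝ)/2) / 2^(N+1) else 0) :=
        Finset.sum_le_sum fun ℓ _ => hcell ℓ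
    _ ≤ (2:ℝ) ^ (-((n:ℕ) : ℝ)/2 + 1) := by
        rw [Fin.sum_univ_eq_sum_range (fun m => if (k:ℕ)*p ≤ m+1 ∧ m < ((k:ℕ)+1)*p
          then (2:ℝ)^(((n:ℕ):ℝ)/2) / 2^(N+1) else 0)]
        rw [Finset.sum_ite, Finset.sum_const, Finset.sum_const_zero, add_zero]
        have hcard : ((Finset.range (2^(N+1))).filter
            (fun m => (k:ℕ)*p ≤ m+1 ∧ m < ((k:ℕ)+1)*p)).card ≤ p + 1 := by
          have hsub : (Finset.range (2^(N+1))).filter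
              (fun m => (k:ℕ)*p ≤ m+1 ∧ m < ((k:ℕ)+1)*p)
              ⊆ Finset.Ico ((k:ℕ)*p - 1) (((k:ℕ)+1)*p) := by
            intro m hm
            simp only [Finset.mem_filter, Finset.mem_range] at hm
            simp only [Finset.mem_Ico]
            omega
          refine (Finset.card_le_card hsub).trans ?_
          rw [Nat.card_Ico]
          have : ((k:ℕ)+1)*p = (k:ℕ)*p + p := by ring
          omega
        have hCpos : (0:ℝ) < (2:ℝ)^(((n:ℕ):ℝ)/2) / 2^(N+1) := by positivity
        calc ((Finset.range (2^(N+1))).filter _).card • ((2:ℝ)^(((n:ℕ):ℝ)/2) / 2^(N+1))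
            ≤ ((p:ℝ) + 1) * ((2:ℝ)^(((n:ℕ):ℝ)/2) / 2^(N+1)) := by
              rw [nsmul_eq_mul]
              apply mul_le_mul_of_nonneg_right _ hCpos.le
              exact_mod_cast hcard
          _ ≤ (2 * (p:ℝ)) * ((2:ℝ)^(((n:ℕ):ℝ)/2) / 2^(N+1)) := by
              apply mul_le_mul_of_nonneg_right _ hCpos.le
              have : (1:ℝ) ≤ (p:ℝ) := by exact_mod_cast hppos
              linarith
          _ = (2:ℝ) ^ (-((n:ℕ) : ℝ)/2 + 1) := by
              have hrw : (-((n:ℕ) : ℝ)/2 + 1) = (((n:ℕ):ℝ)/2) - (n:ℕ) + 1 := by ring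
              rw [hrw, Real.rpow_add (by norm_num), Real.rpow_sub (by norm_num),
                Real.rpow_one, Real.rpow_natCast]
              have hpval : (p:ℝ) = 2^(N+1) / 2^(n:ℕ) := by
                field_simp [← hpR]
                rw [← hpR]; ring
              rw [hpval]
              field_simp

/-- The map `wMap` as a continuous linear map. -/
noncomputable def Wclm (N : ℕ) : (HaarIdx N → ℝ) →L[ℝ] (Fin (2^(N+1)) → ℝ) :=
  LinearMap.toContinuousLinearMap
    (LinearMap.pi (fun ℓ => ∑ i : HaarIdx N,
      deltaPsi N i ℓ • (LinearMap.proj i : (HaarIdx N → ℝ) →ₗ[ℝ] ℝ)))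

lemma Wclm_apply (N : ℕ) (z : HaarIdx N → ℝ) (ℓ : Fin (2^(N+1))) :
    Wclm N z ℓ = ∑ i : HaarIdx N, deltaPsi N i ℓ * z i := by
  simp [Wclm, LinearMap.pi_apply, LinearMap.sum_apply, smul_eq_mul]

lemma wMap_eq_Wclm (N : ℕ) (z : HaarIdx N → ℝ) : wMap N z = Wclm N z := by
  ext ℓ; rw [Wclm_apply]; unfold wMap; exact Finset.sum_congr rfl fun i _ => mul_comm _ _

lemma Wclm_single (N : ℕ) (i₀ : HaarIdx N) :
    Wclm N (Pi.single i₀ 1) = fun ℓ => deltaPsi N i₀ ℓ := by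
  funext ℓ
  rw [Wclm_apply]
  simp [Pi.single_apply, mul_ite, Finset.sum_ite_eq']

end Aux

/-- deterministic form of Lemma 3.4: if all first-order partial derivatives
of `F` at `w(z)` are bounded by `c`, then the partial derivative of `G = F ∘ w` with
respect to the coordinate `z_{n,k}` is bounded by `c · 2^{-n/2 + 1}`. -/


theorem abs_fderiv_comp_wMap_le (N : ℕ) (F : (Fin (2^(N+1)) → ℝ) → ℝ)
    (hF : Differentiable ℝ F) (z : HaarIdx N → ℝ) (c : ℝ) (hc : 0 ≤ c)
    (hbound : ∀ ℓ : Fin (2^(N+1)), |fderiv ℝ F (wMap N z) (Pi.single ℓ 1)| ≤ c)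
    (n : Fin (N+1)) (k : Fin (2^(n:ℕ))) :
    |fderiv ℝ (fun z' => F (wMap N z')) z (Pi.single (some ⟨n, k⟩ : HaarIdx N) 1)| ≤
      c * (2:ℝ) ^ (-((n:ℕ) : ℝ)/2 + 1) := by
  have hkey : fderiv ℝ (fun z' => F (wMap N z')) z
      = (fderiv ℝ F (wMap N z)).comp (Wclm N) := by
    have h1 : (fun z' => F (wMap N z')) = F ∘ (Wclm N) := funext fun z' => by
      rw [wMap_eq_Wclm]; rfl
    rw [h1, wMap_eq_Wclm]
    exact ((hF _).hasFDerivAt.comp z (Wclm N).hasFDerivAt).fderiv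
  rw [hkey]
  set D := fderiv ℝ F (wMap N z) with hD
  have h2 : (D.comp (Wclm N)) (Pi.single (some ⟨n, k⟩ : HaarIdx N) 1)
      = D (fun ℓ => deltaPsi N (some ⟨n, k⟩) ℓ) := by
    rw [ContinuousLinearMap.comp_apply, Wclm_single]
  rw [h2]
  have h3 : D (fun ℓ => deltaPsi N (some ⟨n, k⟩) ℓ)
      = ∑ ℓ : Fin (2^(N+1)), deltaPsi N (some ⟨n, k⟩) ℓ •
          D (fun j => if ℓ = j then (1:ℝ) else 0) :=
    LinearMap.pi_apply_eq_sum_univ (D : (Fin (2^(N+1)) → ℝ) →ₗ[ℝ] ℝ) _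
  have hsingle : ∀ ℓ : Fin (2^(N+1)),
      (fun j => if ℓ = j then (1:ℝ) else 0) = Pi.single ℓ 1 := by
    intro ℓ; funext j; simp [Pi.single_apply, eq_comm]
  simp only [hsingle] at h3
  rw [h3]
  have hsum : ∑ ℓ : Fin (2^(N+1)), |deltaPsi N (some ⟨n, k⟩) ℓ|
      ≤ (2:ℝ) ^ (-((n:ℕ) : ℝ)/2 + 1) := by
    have heq : ∀ ℓ : Fin (2^(N+1)), deltaPsi N (some ⟨n, k⟩) ℓ
        = ∫ s in gridPt N (ℓ:ℕ)..gridPt N ((ℓ:ℕ)+1), haarFn n k s := fun ℓ =>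
      haarAnti_sub n k _ _
    simp_rw [heq]
    exact sum_abs_key N n k
  calc |∑ ℓ : Fin (2^(N+1)), deltaPsi N (some ⟨n, k⟩) ℓ • D (Pi.single ℓ 1)|
      ≤ ∑ ℓ : Fin (2^(N+1)), |deltaPsi N (some ⟨n, k⟩) ℓ| * |D (Pi.single ℓ 1)| := by
        refine (Finset.abs_sum_le_sum_abs _ _).trans_eq ?_
        exact Finset.sum_congr rfl fun ℓ _ => by rw [smul_eq_mul, abs_mul]
    _ ≤ ∑ ℓ : Fin (2^(N+1)), |deltaPsi N (some ⟨n, k⟩) ℓ| * c :=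
        Finset.sum_le_sum fun ℓ _ => mul_le_mul_of_nonneg_left (hbound ℓ) (abs_nonneg _)
    _ = c * ∑ ℓ : Fin (2^(N+1)), |deltaPsi N (some ⟨n, k⟩) ℓ| := by
        rw [← Finset.sum_mul, mul_comm]
    _ ≤ c * (2:ℝ) ^ (-((n:ℕ) : ℝ)/2 + 1) := mul_le_mul_of_nonneg_left hsum hc
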